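/- For t > 1, the function u(t) = (t+1) ln((t²+1)/2) − t ln(t²) is strictly negative; equivalently, ln((t²+1)/2) < t ln(2t²/(t²+1)) for all t > 1. -/

import Mathlib

noncomputable def Ufun (t : ℝ) : ℝ := (t + 1) * Real.log ((t ^ 2 + 1) / 2) - t * Real.log (t ^ 2)

noncomputable def Ffun (t : ℝ) : ℝ :=
  Real.log ((t ^ 2 + 1) / 2) - Real.log (t ^ 2) + (2 * t ^ 2 + 2 * t) / (t ^ 2 + 1) - 2

lemma hasDerivAt_inner (t : ℝ) : HasDerivAt (fun x : ℝ => (x ^ 2 + 1) / 2) t t := by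
  have := ((hasDerivAt_pow 2 t).add_const 1).div_const 2
  simpa using this

lemma inner_pos (t : ℝ) : 0 < (t ^ 2 + 1) / 2 := by positivity

lemma hasDerivAt_log_inner (t : ℝ) :
    HasDerivAt (fun x : ℝ => Real.log ((x ^ 2 + 1) / 2)) (t / ((t ^ 2 + 1) / 2)) t :=
  (hasDerivAt_inner t).log (ne_of_gt (inner_pos t))

lemma hasDerivAt_log_sq (t : ℝ) (ht : 0 < t) :
    HasDerivAt (fun x : ℝ => Real.log (x ^ 2)) (2 * t / t ^ 2) t := by
  have h : HasDerivAt (fun x : ℝ => x ^ 2) (2 * t) t := by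
    simpa using hasDerivAt_pow 2 t
  exact h.log (by positivity)

lemma hasDerivAt_U (t : ℝ) (ht : 0 < t) : HasDerivAt Ufun (Ffun t) t := by
  have h1 : HasDerivAt (fun x : ℝ => (x + 1) * Real.log ((x ^ 2 + 1) / 2))
      (1 * Real.log ((t ^ 2 + 1) / 2) + (t + 1) * (t / ((t ^ 2 + 1) / 2))) t :=
    ((hasDerivAt_id t).add_const 1).mul (hasDerivAt_log_inner t)
  have h2 : HasDerivAt (fun x : ℝ => x * Real.log (x ^ 2))
      (1 * Real.log (t ^ 2) + t * (2 * t / t ^ 2)) t :=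
    (hasDerivAt_id t).mul (hasDerivAt_log_sq t ht)
  have h := h1.sub h2
  refine h.congr_deriv ?_
  have ht2 : (t : ℝ) ^ 2 + 1 ≠ 0 := by positivity
  have ht0 : (t : ℝ) ≠ 0 := ne_of_gt ht
  unfold Ffun
  field_simp
  ring

lemma hasDerivAt_F (t : ℝ) (ht : 0 < t) :
    HasDerivAt Ffun (-(2 * (t - 1) ^ 2 * (t + 1) / (t * (t ^ 2 + 1) ^ 2))) t := by
  have hnum : HasDerivAt (fun x : ℝ => 2 * x ^ 2 + 2 * x) (4 * t + 2) t := by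
    have h := ((hasDerivAt_pow 2 t).const_mul 2).add ((hasDerivAt_id' t).const_mul 2)
    refine h.congr_deriv ?_
    push_cast
    ring
  have hden : HasDerivAt (fun x : ℝ => x ^ 2 + 1) (2 * t) t := by
    simpa using (hasDerivAt_pow 2 t).add_const 1
  have ht2 : (t : ℝ) ^ 2 + 1 ≠ 0 := by positivity
  have hq : HasDerivAt (fun x : ℝ => (2 * x ^ 2 + 2 * x) / (x ^ 2 + 1))
      (((4 * t + 2) * (t ^ 2 + 1) - (2 * t ^ 2 + 2 * t) * (2 * t)) / (t ^ 2 + 1) ^ 2) t :=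
    hnum.div hden ht2
  have h := (((hasDerivAt_log_inner t).sub (hasDerivAt_log_sq t ht)).add hq).sub_const 2
  refine h.congr_deriv ?_
  have ht0 : (t : ℝ) ≠ 0 := ne_of_gt ht
  field_simp
  ring

lemma F_neg (t : ℝ) (ht : 1 < t) : Ffun t < 0 := by
  have hanti : StrictAntiOn Ffun (Set.Ici (1 : ℝ)) := by
    apply strictAntiOn_of_deriv_neg (convex_Ici 1)
    · intro x hx
      exact (hasDerivAt_F x (lt_of_lt_of_le one_pos hx)).continuousAt.continuousWithinAt
    · intro x hx
      rw [interior_Ici] at hx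
      have hx1 : (1 : ℝ) < x := hx
      rw [(hasDerivAt_F x (by linarith)).deriv]
      have h1 : 0 < 2 * (x - 1) ^ 2 * (x + 1) / (x * (x ^ 2 + 1) ^ 2) := by
        have : (0:ℝ) < x - 1 := by linarith
        positivity
      linarith
  have hF1 : Ffun 1 = 0 := by
    unfold Ffun
    norm_num
  have := hanti (Set.mem_Ici.mpr le_rfl) (le_of_lt ht) ht
  rw [hF1] at this
  exact this

lemma U_neg (t : ℝ) (ht : 1 < t) : Ufun t < 0 := by
  have hanti : StrictAntiOn Ufun (Set.Ici (1 : ℝ)) := by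
    apply strictAntiOn_of_deriv_neg (convex_Ici 1)
    · intro x hx
      exact (hasDerivAt_U x (lt_of_lt_of_le one_pos hx)).continuousAt.continuousWithinAt
    · intro x hx
      rw [interior_Ici] at hx
      have hx1 : (1 : ℝ) < x := hx
      rw [(hasDerivAt_U x (by linarith)).deriv]
      exact F_neg x hx1
  have hU1 : Ufun 1 = 0 := by
    unfold Ufun; norm_num
  have := hanti (Set.mem_Ici.mpr le_rfl) (le_of_lt ht) ht
  rw [hU1] at this
  exact this

theorem key_inequality (t : ℝ) (ht : 1 < t) :
    (t + 1) * Real.log ((t ^ 2 + 1) / 2) - t * Real.log (t ^ 2) < 0 ∧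
    Real.log ((t ^ 2 + 1) / 2) < t * Real.log (2 * t ^ 2 / (t ^ 2 + 1)) := by
  have hU := U_neg t ht
  unfold Ufun at hU
  constructor
  · exact hU
  · have ht0 : (0:ℝ) < t := by linarith
    have h1 : 2 * t ^ 2 / (t ^ 2 + 1) = t ^ 2 / ((t ^ 2 + 1) / 2) := by
      field_simp
    have h2 : Real.log (2 * t ^ 2 / (t ^ 2 + 1)) =
        Real.log (t ^ 2) - Real.log ((t ^ 2 + 1) / 2) := by
      rw [h1, Real.log_div (by positivity) (by positivity)]
    rw [h2]
    nlinarith [hU]
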